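/- Let G₀ ∈ F₂^{n×l} and let B_w be the number of nonzero vectors c of weight w with G₀ᵀ c = 0, with d₀ the minimum such weight. For u with d₀ ≤ u ≤ n, the number of u-subsets U of row indices for which rank(G₀^U) < u is at most Σ_{w=d₀}^{u} B_w · C(n−w, u−w); hence the fraction of rank-deficient u-subsets is at most (Σ_{w=d₀}^{u} B_w C(n−w,u−w)) / C(n,u). -/

import Mathlib

open Finset

/-- The number of `u`-subsets of `Fin n` containing a fixed set `s`. -/
lemma card_supersets_aux {n u : ℕ} (s : Finset (Fin n)) (hs : s.card ≤ u) :
    (Finset.univ.filter (fun U : Finset (Fin n) => U.card = u ∧ s ⊆ U)).card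
      = (n - s.card).choose (u - s.card) := by
  classical
  have hcompl : (sᶜ : Finset (Fin n)).card = n - s.card := by
    rw [Finset.card_compl, Fintype.card_fin]
  rw [← hcompl, ← Finset.card_powersetCard (u - s.card) sᶜ]
  apply Finset.card_bij' (fun U _ => U \ s) (fun V _ => V ∪ s)
  · intro U hU
    simp only [Finset.mem_filter, Finset.mem_univ, true_and] at hU
    rw [Finset.mem_powersetCard]
    constructor
    · intro i hi
      rw [Finset.mem_sdiff] at hi
      simpa [Finset.mem_compl] using hi.2
    · rw [Finset.card_sdiff_of_subset hU.2, hU.1]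
  · intro V hV
    rw [Finset.mem_powersetCard] at hV
    have hdisj : Disjoint V s := by
      rw [Finset.disjoint_left]
      intro a haV haS
      have := hV.1 haV
      simp [Finset.mem_compl, haS] at this
    simp only [Finset.mem_filter, Finset.mem_univ, true_and]
    constructor
    · rw [Finset.card_union_of_disjoint hdisj, hV.2, Nat.sub_add_cancel hs]
    · exact Finset.subset_union_right
  · intro U hU
    simp only [Finset.mem_filter, Finset.mem_univ, true_and] at hU
    exact Finset.sdiff_union_of_subset hU.2
  · intro V hV
    rw [Finset.mem_powersetCard] at hV
    have hdisj : Disjoint V s := by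
      rw [Finset.disjoint_left]
      intro a haV haS
      have := hV.1 haV
      simp [Finset.mem_compl, haS] at this
    exact Finset.union_sdiff_cancel_right hdisj

/-- If the row-submatrix indexed by `U` has rank less than `|U|`, there is a nonzero
kernel vector of `G₀ᵀ` supported inside `U`. -/
lemma exists_kernel_vec {n l u : ℕ} (G₀ : Matrix (Fin n) (Fin l) (ZMod 2))
    (U : Finset (Fin n)) (hcard : U.card = u)
    (hrk : (G₀.submatrix (fun i : U => (i : Fin n)) id).rank < u) :
    ∃ c : Fin n → ZMod 2, c ≠ 0 ∧ G₀.transpose.mulVec c = 0 ∧ ∀ i, c i ≠ 0 → i ∈ U := by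
  classical
  set M := G₀.submatrix (fun i : U => (i : Fin n)) id with hM
  have hli : ¬ LinearIndependent (ZMod 2) M := by
    intro h
    have hr : M.rank = Fintype.card U := h.rank_matrix
    rw [Fintype.card_coe, hcard] at hr
    omega
  replace hli : ¬ LinearIndependent (ZMod 2) (fun i : U => M i) := hli
  rw [Fintype.not_linearIndependent_iff] at hli
  obtain ⟨g, hg0, i₀, hi₀⟩ := hli
  refine ⟨fun i => if h : i ∈ U then g ⟨i, h⟩ else 0, ?_, ?_, ?_⟩
  · intro hc
    apply hi₀
    have := congrFun hc (i₀ : Fin n)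
    simpa [i₀.2] using this
  · funext j
    have hj := congrFun hg0 j
    simp only [Finset.sum_apply, Pi.smul_apply, smul_eq_mul, Pi.zero_apply] at hj
    simp only [Matrix.mulVec, dotProduct, Matrix.transpose_apply, Pi.zero_apply]
    calc ∑ i : Fin n, G₀ i j * (if h : i ∈ U then g ⟨i, h⟩ else 0)
        = ∑ i ∈ U, G₀ i j * (if h : i ∈ U then g ⟨i, h⟩ else 0) := by
          refine (Finset.sum_subset (Finset.subset_univ U) ?_).symm
          intro x _ hx
          simp [hx]
      _ = ∑ i ∈ U.attach, G₀ (i : Fin n) j *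
            (if h : (i : Fin n) ∈ U then g ⟨i, h⟩ else 0) := (Finset.sum_attach _ _).symm
      _ = ∑ i : U, g i * M i j := by
          rw [Finset.univ_eq_attach]
          refine Finset.sum_congr rfl ?_
          intro i _
          rw [dif_pos i.2]
          simp [hM, Matrix.submatrix_apply, mul_comm]
      _ = 0 := hj
  · intro i hi
    by_contra h
    simp [h] at hi

theorem count_rank_deficient_subsets_le (n l d₀ u : ℕ) (hdu : d₀ ≤ u) (hun : u ≤ n)
    (G₀ : Matrix (Fin n) (Fin l) (ZMod 2))
    (B : ℕ → ℕ)
    (hB : ∀ w, B w = {c : Fin n → ZMod 2 | c ≠ 0 ∧ G₀.transpose.mulVec c = 0 ∧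
        hammingNorm c = w}.ncard)
    (hd₀ : ∀ c : Fin n → ZMod 2, c ≠ 0 → G₀.transpose.mulVec c = 0 → d₀ ≤ hammingNorm c)
    (hd₀ex : ∃ c : Fin n → ZMod 2, c ≠ 0 ∧ G₀.transpose.mulVec c = 0 ∧ hammingNorm c = d₀) :
    {U : Finset (Fin n) | U.card = u ∧
        (G₀.submatrix (fun i : U => (i : Fin n)) id).rank < u}.ncard
      ≤ ∑ w ∈ Finset.Icc d₀ u, B w * (n - w).choose (u - w) ∧
    ({U : Finset (Fin n) | U.card = u ∧
        (G₀.submatrix (fun i : U => (i : Fin n)) id).rank < u}.ncard : ℝ) / (n.choose u : ℝ)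
      ≤ (∑ w ∈ Finset.Icc d₀ u, (B w : ℝ) * ((n - w).choose (u - w) : ℝ)) / (n.choose u : ℝ) := by
  classical
  set K : Finset (Fin n → ZMod 2) :=
    Finset.univ.filter (fun c => c ≠ 0 ∧ G₀.transpose.mulVec c = 0 ∧ hammingNorm c ≤ u) with hK
  set P : Finset ((Fin n → ZMod 2) × Finset (Fin n)) :=
    Finset.univ.filter (fun p => p.1 ∈ K ∧ p.2.card = u ∧ ∀ i, p.1 i ≠ 0 → i ∈ p.2) with hP
  set Bad : Finset (Finset (Fin n)) :=
    Finset.univ.filter (fun U => U.card = u ∧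
      (G₀.submatrix (fun i : U => (i : Fin n)) id).rank < u) with hBad
  have hS : {U : Finset (Fin n) | U.card = u ∧
      (G₀.submatrix (fun i : U => (i : Fin n)) id).rank < u}.ncard = Bad.card := by
    rw [← Set.ncard_coe_finset]
    congr 1
    ext U
    simp [hBad]
  -- support of a vector as a finset
  have hsupp : ∀ c : Fin n → ZMod 2,
      (Finset.univ.filter (fun i => c i ≠ 0)).card = hammingNorm c := fun c => rfl
  -- Step A: Bad.card ≤ P.card
  have hstep : ∀ U ∈ Bad, ∃ c, (c, U) ∈ P := by
    intro U hU
    simp only [hBad, Finset.mem_filter, Finset.mem_univ, true_and] at hU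
    obtain ⟨c, hc0, hcker, hcsupp⟩ := exists_kernel_vec G₀ U hU.1 hU.2
    refine ⟨c, ?_⟩
    simp only [hP, Finset.mem_filter, Finset.mem_univ, true_and]
    refine ⟨?_, hU.1, hcsupp⟩
    simp only [hK, Finset.mem_filter, Finset.mem_univ, true_and]
    refine ⟨hc0, hcker, ?_⟩
    rw [← hsupp c, ← hU.1]
    apply Finset.card_le_card
    intro i hi
    exact hcsupp i (by simpa using hi)
  choose f hf using hstep
  have hA : Bad.card ≤ P.card := by
    apply Finset.card_le_card_of_injOn
      (fun U => ((if h : U ∈ Bad then f U h else 0), U))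
    · intro U hU
      simp only [dif_pos (Finset.mem_coe.mp hU)]
      exact hf U (Finset.mem_coe.mp hU)
    · intro a _ b _ h
      exact congrArg Prod.snd h
  -- Step B: P.card = the sum
  have hfibcard : ∀ c ∈ K, (P.filter (fun p => p.1 = c)).card
      = (n - hammingNorm c).choose (u - hammingNorm c) := by
    intro c hc
    simp only [hK, Finset.mem_filter, Finset.mem_univ, true_and] at hc
    rw [← hsupp c]
    rw [← card_supersets_aux (Finset.univ.filter (fun i => c i ≠ 0)) (by rw [hsupp]; exact hc.2.2)]
    refine Finset.card_bij' (fun p _ => p.2) (fun U _ => (c, U)) ?_ ?_ ?_ ?_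
    · intro p hp
      rw [Finset.mem_filter] at hp
      obtain ⟨hpP, heq⟩ := hp
      simp only [hP, Finset.mem_filter, Finset.mem_univ, true_and] at hpP
      obtain ⟨_, hcard, hsup⟩ := hpP
      simp only [Finset.mem_filter, Finset.mem_univ, true_and]
      exact ⟨hcard, fun i hi => by
        subst heq; exact hsup i (by simpa using hi)⟩
    · intro U hU
      simp only [Finset.mem_filter, Finset.mem_univ, true_and] at hU
      rw [Finset.mem_filter]
      refine ⟨?_, rfl⟩
      simp only [hP, Finset.mem_filter, Finset.mem_univ, true_and]
      refine ⟨?_, hU.1, fun i hi => hU.2 (by simpa using hi)⟩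
      simp only [hK, Finset.mem_filter, Finset.mem_univ, true_and]
      exact ⟨hc.1, hc.2.1, hc.2.2⟩
    · intro p hp
      rw [Finset.mem_filter] at hp
      simp [← hp.2]
    · intro U _
      rfl
  have hwt : ∀ c ∈ K, hammingNorm c ∈ Finset.Icc d₀ u := by
    intro c hc
    simp only [hK, Finset.mem_filter, Finset.mem_univ, true_and] at hc
    exact Finset.mem_Icc.mpr ⟨hd₀ c hc.1 hc.2.1, hc.2.2⟩
  have hBw : ∀ w ∈ Finset.Icc d₀ u,
      (K.filter (fun c => hammingNorm c = w)).card = B w := by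
    intro w hw
    rw [Finset.mem_Icc] at hw
    rw [hB w, ← Set.ncard_coe_finset]
    congr 1
    ext c
    simp only [Finset.coe_filter, hK, Finset.mem_filter, Finset.mem_univ, true_and,
      Set.mem_setOf_eq, Set.mem_sep_iff]
    constructor
    · rintro ⟨⟨h1, h2, _⟩, h4⟩
      exact ⟨h1, h2, h4⟩
    · rintro ⟨h1, h2, h3⟩
      exact ⟨⟨h1, h2, h3 ▸ hw.2⟩, h3⟩
  have hBcount : P.card = ∑ w ∈ Finset.Icc d₀ u, B w * (n - w).choose (u - w) := by
    rw [Finset.card_eq_sum_card_fiberwise (f := Prod.fst) (t := K)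
      (fun p hp => by simp only [hP, Finset.mem_coe, Finset.mem_filter] at hp; exact hp.2.1)]
    rw [Finset.sum_congr rfl hfibcard]
    rw [← Finset.sum_fiberwise_of_maps_to hwt
      (fun c => (n - hammingNorm c).choose (u - hammingNorm c))]
    refine Finset.sum_congr rfl ?_
    intro w hw
    rw [← hBw w hw]
    calc ∑ c ∈ K.filter (fun c => hammingNorm c = w),
          (n - hammingNorm c).choose (u - hammingNorm c)
        = ∑ _c ∈ K.filter (fun c => hammingNorm c = w), (n - w).choose (u - w) :=
          Finset.sum_congr rfl (fun c hc => by rw [(Finset.mem_filter.mp hc).2])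
      _ = _ := by rw [Finset.sum_const, smul_eq_mul]
  have hmain : {U : Finset (Fin n) | U.card = u ∧
      (G₀.submatrix (fun i : U => (i : Fin n)) id).rank < u}.ncard
      ≤ ∑ w ∈ Finset.Icc d₀ u, B w * (n - w).choose (u - w) := by
    rw [hS, ← hBcount]
    exact hA
  refine ⟨hmain, ?_⟩
  have hsum : (∑ w ∈ Finset.Icc d₀ u, (B w : ℝ) * ((n - w).choose (u - w) : ℝ))
      = ((∑ w ∈ Finset.Icc d₀ u, B w * (n - w).choose (u - w) : ℕ) : ℝ) := by
    push_cast
    rfl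
  rw [hsum]
  have hpos : (0 : ℝ) < (n.choose u : ℝ) := by
    exact_mod_cast Nat.choose_pos hun
  apply div_le_div_of_nonneg_right ?_ hpos.le
  exact_mod_cast hmain
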